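/- arXiv:2506.03690 — 2 statements merged into one kernel-verified Lean document; each statement's English description precedes it below -/
import Mathlib

section
/- Fix reals m₁,…,m_n, γ₀ > 0, and τ > 0. The function F(p) = ∑_i [log(1 + exp(m_i - n·p_i·γ₀)) + τ·p_i·log(n·p_i)] defined on the open probability simplex {p ∈ ℝⁿ : p_i > 0, ∑ p_i = 1} is strictly convex and attains a unique minimizer on the simplex closure's interior. -/
open Real Set

lemma hasDeriv_logexp (t : ℝ) :
    HasDerivAt (fun t => Real.log (1 + Real.exp t)) (Real.exp t / (1 + Real.exp t)) t := by
  have h : HasDerivAt (fun t => 1 + Real.exp t) (Real.exp t) t :=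
    (Real.hasDerivAt_exp t).const_add 1
  exact h.log (by positivity)

lemma convexOn_logexp : ConvexOn ℝ univ (fun t => Real.log (1 + Real.exp t)) := by
  have hd : ∀ t, deriv (fun t => Real.log (1 + Real.exp t)) t = Real.exp t / (1 + Real.exp t) :=
    fun t => (hasDeriv_logexp t).deriv
  refine Monotone.convexOn_univ_of_deriv (fun t => (hasDeriv_logexp t).differentiableAt) ?_
  intro a b hab
  rw [hd a, hd b]
  rw [div_le_div_iff₀ (by positivity) (by positivity)]
  have := Real.exp_le_exp.2 hab
  nlinarith [Real.exp_pos a, Real.exp_pos b]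

lemma convexOn_comp_affine {g : ℝ → ℝ} (hg : ConvexOn ℝ univ g) (c d : ℝ) :
    ConvexOn ℝ univ (fun x => g (c - d * x)) := by
  refine ⟨convex_univ, fun x _ y _ a b ha hb hab => ?_⟩
  have := hg.2 (mem_univ (c - d * x)) (mem_univ (c - d * y)) ha hb hab
  simp only [smul_eq_mul] at this ⊢
  have harg : c - d * (a * x + b * y) = a * (c - d * x) + b * (c - d * y) := by linear_combination (-c) * hab
  rw [harg]; exact this

lemma strictConvexOn_congr {s : Set ℝ} {f g : ℝ → ℝ} (hf : StrictConvexOn ℝ s f)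
    (h : ∀ x ∈ s, f x = g x) : StrictConvexOn ℝ s g := by
  refine ⟨hf.1, fun x hx y hy hne a b ha hb hab => ?_⟩
  rw [← h _ hx, ← h _ hy, ← h _ (hf.1 hx hy ha.le hb.le hab)]
  exact hf.2 hx hy hne ha hb hab

lemma strictConvexOn_entropy {n : ℕ} (hn : 1 ≤ n) {τ : ℝ} (hτ : 0 < τ) :
    StrictConvexOn ℝ (Ioi (0:ℝ)) (fun x => τ * x * Real.log (n * x)) := by
  have hn0 : (0:ℝ) < n := by exact_mod_cast Nat.lt_of_lt_of_le Nat.zero_lt_one hn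
  have hlogn : 0 ≤ Real.log n := Real.log_nonneg (by exact_mod_cast hn)
  have h1 : StrictConvexOn ℝ (Ici (0:ℝ)) (fun x => x * Real.log x + Real.log n * x) :=
    Real.strictConvexOn_mul_log.add_convexOn ((convexOn_id (convex_Ici 0)).smul hlogn)
  have h2 : StrictConvexOn ℝ (Ioi (0:ℝ)) (fun x => x * Real.log x + Real.log n * x) :=
    h1.subset Ioi_subset_Ici_self (convex_Ioi 0)
  have h3 : StrictConvexOn ℝ (Ioi (0:ℝ)) (fun x => x * Real.log (n * x)) := by
    refine strictConvexOn_congr h2 (fun x hx => ?_)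
    rw [Real.log_mul (ne_of_gt hn0) (ne_of_gt hx)]
    ring
  refine ⟨h3.1, fun x hx y hy hne a b ha hb hab => ?_⟩
  have h4 := h3.2 hx hy hne ha hb hab
  simp only [smul_eq_mul] at h4 ⊢
  calc τ * (a * x + b * y) * Real.log (n * (a * x + b * y))
      = τ * ((a * x + b * y) * Real.log (n * (a * x + b * y))) := by ring
    _ < τ * (a * (x * Real.log (n * x)) + b * (y * Real.log (n * y))) :=
        mul_lt_mul_of_pos_left h4 hτ
    _ = a * (τ * x * Real.log (n * x)) + b * (τ * y * Real.log (n * y)) := by ring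

lemma strictConvexOn_coord {n : ℕ} (hn : 1 ≤ n) (c γ₀ τ : ℝ) (hγ₀ : 0 < γ₀) (hτ : 0 < τ) :
    StrictConvexOn ℝ (Ioi (0:ℝ))
      (fun x => Real.log (1 + Real.exp (c - n * x * γ₀)) + τ * x * Real.log (n * x)) := by
  have h1 : ConvexOn ℝ univ (fun x => Real.log (1 + Real.exp (c - (n * γ₀) * x))) :=
    convexOn_comp_affine convexOn_logexp c (n * γ₀)
  have h1' : ConvexOn ℝ (Ioi (0:ℝ)) (fun x => Real.log (1 + Real.exp (c - n * x * γ₀))) := by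
    have := h1.subset (subset_univ _) (convex_Ioi 0)
    convert this using 2 with x
    ring_nf
  exact h1'.add_strictConvexOn (strictConvexOn_entropy hn hτ)

lemma strictConvexOn_simplex_sum {n : ℕ} (f : Fin n → ℝ → ℝ)
    (hf : ∀ i, StrictConvexOn ℝ (Ioi (0:ℝ)) (f i)) :
    StrictConvexOn ℝ {p : Fin n → ℝ | (∀ i, 0 < p i) ∧ ∑ i, p i = 1}
      (fun p => ∑ i, f i (p i)) := by
  constructor
  · intro p hp q hq a b ha hb hab
    refine ⟨fun i => ?_, ?_⟩
    · simp only [Pi.add_apply, Pi.smul_apply, smul_eq_mul]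
      rcases eq_or_lt_of_le ha with h|h
      · have hb1 : b = 1 := by linarith
        rw [← h, hb1]; simpa using hq.1 i
      · exact add_pos_of_pos_of_nonneg (mul_pos h (hp.1 i)) (mul_nonneg hb (hq.1 i).le)
    · simp only [Pi.add_apply, Pi.smul_apply, smul_eq_mul]
      rw [Finset.sum_add_distrib, ← Finset.mul_sum, ← Finset.mul_sum, hp.2, hq.2]
      simpa using hab
  · intro p hp q hq hne a b ha hb hab
    have hle : ∀ i, f i (a * p i + b * q i) ≤ a * f i (p i) + b * f i (q i) := by
      intro i
      rcases eq_or_ne (p i) (q i) with h|h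
      · have e1 : a * p i + b * q i = q i := by rw [h, ← add_mul, hab, one_mul]
        have e2 : a * f i (p i) + b * f i (q i) = f i (q i) := by
          rw [h, ← add_mul, hab, one_mul]
        rw [e1, e2]
      · exact le_of_lt ((hf i).2 (hp.1 i) (hq.1 i) h ha hb hab)
    obtain ⟨j, hj⟩ : ∃ j, p j ≠ q j := by
      by_contra hc; push_neg at hc; exact hne (funext hc)
    have hstrict : f j (a * p j + b * q j) < a * f j (p j) + b * f j (q j) :=
      (hf j).2 (hp.1 j) (hq.1 j) hj ha hb hab
    simp only [Pi.add_apply, Pi.smul_apply, smul_eq_mul]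
    calc ∑ i, f i (a * p i + b * q i)
        < ∑ i, (a * f i (p i) + b * f i (q i)) :=
          Finset.sum_lt_sum (fun i _ => hle i) ⟨j, Finset.mem_univ j, hstrict⟩
      _ = a * ∑ i, f i (p i) + b * ∑ i, f i (q i) := by
          rw [Finset.sum_add_distrib, Finset.mul_sum, Finset.mul_sum]

lemma logexp_shift (s d : ℝ) (hd : 0 ≤ d) :
    Real.log (1 + Real.exp (s + d)) ≤ d + Real.log (1 + Real.exp s) := by
  have h2 : 1 + Real.exp (s + d) ≤ Real.exp d * (1 + Real.exp s) := by
    rw [Real.exp_add, mul_comm (Real.exp s) (Real.exp d)]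
    have h3 : 1 ≤ Real.exp d := Real.one_le_exp hd
    nlinarith [Real.exp_pos s]
  calc Real.log (1 + Real.exp (s + d)) ≤ Real.log (Real.exp d * (1 + Real.exp s)) :=
        Real.log_le_log (by positivity) h2
    _ = d + Real.log (1 + Real.exp s) := by
        rw [Real.log_mul (by positivity) (by positivity), Real.log_exp]

lemma sum_two_ite {n : ℕ} {j k : Fin n} (hjk : j ≠ k) (A B : ℝ) :
    ∑ i, (if i = j then A else if i = k then B else 0) = A + B := by
  have : ∀ i : Fin n, (if i = j then A else if i = k then B else 0)
      = (if i = j then A else 0) + (if i = k then B else 0) := by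
    intro i
    by_cases h1 : i = j
    · subst h1; simp [hjk]
    · by_cases h2 : i = k <;> simp [h1, h2, Ne.symm hjk]
  rw [Finset.sum_congr rfl (fun i _ => this i), Finset.sum_add_distrib,
    Finset.sum_ite_eq' Finset.univ j (fun _ => A), Finset.sum_ite_eq' Finset.univ k (fun _ => B)]
  simp
set_option maxHeartbeats 1000000 in
theorem gammaPO_objective_strict_convex_unique_min
    (n : ℕ) (hn : 1 ≤ n) (m : Fin n → ℝ) (γ₀ τ : ℝ) (hγ₀ : 0 < γ₀) (hτ : 0 < τ) :
    StrictConvexOn ℝ {p : Fin n → ℝ | (∀ i, 0 < p i) ∧ ∑ i, p i = 1}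
      (fun p => ∑ i, (Real.log (1 + Real.exp (m i - n * p i * γ₀)) +
        τ * p i * Real.log (n * p i))) ∧
    ∃! p : Fin n → ℝ, ((∀ i, 0 < p i) ∧ ∑ i, p i = 1) ∧
      ∀ q : Fin n → ℝ, ((∀ i, 0 < q i) ∧ ∑ i, q i = 1) →
        (∑ i, (Real.log (1 + Real.exp (m i - n * p i * γ₀)) + τ * p i * Real.log (n * p i))) ≤
        (∑ i, (Real.log (1 + Real.exp (m i - n * q i * γ₀)) + τ * q i * Real.log (n * q i))) := by
  have hn0 : (0:ℝ) < n := by exact_mod_cast Nat.lt_of_lt_of_le Nat.zero_lt_one hn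
  have hn1 : (1:ℝ) ≤ n := by exact_mod_cast hn
  set S : Set (Fin n → ℝ) := {p : Fin n → ℝ | (∀ i, 0 < p i) ∧ ∑ i, p i = 1} with hS
  set F : (Fin n → ℝ) → ℝ := fun p => ∑ i, (Real.log (1 + Real.exp (m i - n * p i * γ₀)) +
    τ * p i * Real.log (n * p i)) with hF
  set T : Fin n → ℝ → ℝ := fun i x =>
    Real.log (1 + Real.exp (m i - n * x * γ₀)) + τ * x * Real.log (n * x) with hT
  have hFT : ∀ r : Fin n → ℝ, F r = ∑ i, T i (r i) := fun r => rfl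
  have hSC : StrictConvexOn ℝ S F :=
    strictConvexOn_simplex_sum T (fun i => strictConvexOn_coord hn (m i) γ₀ τ hγ₀ hτ)
  refine ⟨hSC, ?_⟩
  -- continuity of F
  have hcont : Continuous F := by
    rw [hF]
    apply continuous_finset_sum
    intro i _
    apply Continuous.add
    · apply Continuous.log
      · exact (continuous_const.add (((continuous_const.sub
          (((continuous_const.mul (continuous_apply i)).mul continuous_const)))).rexp))
      · intro p; positivity
    · have key : (fun x : ℝ => τ * x * Real.log (n * x))
          = fun x => (τ / n) * ((n * x) * Real.log (n * x)) := by
        funext x; field_simp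
      have : Continuous fun x : ℝ => τ * x * Real.log (n * x) := by
        rw [key]
        exact continuous_const.mul
          (Real.continuous_mul_log.comp (continuous_const.mul continuous_id))
      exact this.comp (continuous_apply i)
  -- minimizer on the compact standard simplex
  have hKne : (stdSimplex ℝ (Fin n)).Nonempty := by
    refine ⟨fun _ => (n:ℝ)⁻¹, fun i => by positivity, ?_⟩
    simp [Finset.sum_const, Finset.card_univ]
    field_simp
  obtain ⟨p, hpK, hpmin⟩ :=
    (isCompact_stdSimplex ℝ (Fin n)).exists_isMinOn hKne hcont.continuousOn
  -- the minimizer has positive coordinates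
  have hpos : ∀ i, 0 < p i := by
    by_contra hcon
    push_neg at hcon
    obtain ⟨j, hj⟩ := hcon
    have hpj : p j = 0 := le_antisymm hj (hpK.1 j)
    -- find a big coordinate
    obtain ⟨k, hk⟩ : ∃ k, 1 / (n:ℝ) ≤ p k := by
      by_contra hc2
      push_neg at hc2
      have hne' : (Finset.univ : Finset (Fin n)).Nonempty := ⟨⟨0, hn⟩, Finset.mem_univ _⟩
      have hlt : ∑ i, p i < ∑ _i : Fin n, 1 / (n:ℝ) :=
        Finset.sum_lt_sum_of_nonempty hne' (fun i _ => hc2 i)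
      rw [hpK.2] at hlt
      rw [Finset.sum_const, Finset.card_univ, Fintype.card_fin] at hlt
      rw [nsmul_eq_mul] at hlt
      rw [mul_one_div, div_self (ne_of_gt hn0)] at hlt
      exact absurd hlt (lt_irrefl 1)
    have hpk : 0 < p k := lt_of_lt_of_le (by positivity) hk
    have hjk : j ≠ k := by
      intro h; rw [h] at hpj; rw [hpj] at hpk; exact lt_irrefl 0 hpk
    set b : ℝ := (n:ℝ) * γ₀ with hb
    have hbpos : 0 < b := mul_pos hn0 hγ₀
    obtain ⟨c, hc_id⟩ : ∃ c, τ * c = b + τ * Real.log 2 + τ :=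
      ⟨(b + τ * Real.log 2 + τ) / τ, by field_simp⟩
    obtain ⟨ε, hεpos, hεk, hεe⟩ :
        ∃ ε, 0 < ε ∧ ε ≤ p k / 2 ∧ ε ≤ Real.exp (-c) / n := by
      refine ⟨min (p k / 2) (Real.exp (-c) / n), lt_min (by positivity) (by positivity),
        min_le_left _ _, min_le_right _ _⟩
    set q : Fin n → ℝ := fun i => if i = j then ε else if i = k then p k - ε else p i with hq
    have hqj : q j = ε := by simp [hq]
    have hqk : q k = p k - ε := by simp [hq, Ne.symm hjk]
    have hqK : q ∈ stdSimplex ℝ (Fin n) := by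
      constructor
      · intro i
        by_cases h1 : i = j
        · rw [h1, hqj]; exact hεpos.le
        · by_cases h2 : i = k
          · rw [h2, hqk]; linarith
          · simp only [hq, h1, h2, if_false]; exact hpK.1 i
      · have hqi : ∀ i, q i = p i + (if i = j then ε - p j else if i = k then -ε else 0) := by
          intro i
          by_cases h1 : i = j
          · rw [h1, hqj, hpj]; simp
          · by_cases h2 : i = k
            · rw [h2, hqk]; simp [h2, Ne.symm hjk]; ring
            · simp [hq, h1, h2]
        rw [Finset.sum_congr rfl (fun i _ => hqi i), Finset.sum_add_distrib, hpK.2,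
          sum_two_ite hjk, hpj]
        ring
    -- F q < F p
    have hsplit : F q - F p = (T j ε - T j 0) + (T k (p k - ε) - T k (p k)) := by
      rw [hFT, hFT, ← Finset.sum_sub_distrib]
      have hterm : ∀ i : Fin n, T i (q i) - T i (p i)
          = (if i = j then T j ε - T j 0 else if i = k then T k (p k - ε) - T k (p k) else 0) := by
        intro i
        by_cases h1 : i = j
        · rw [h1, hqj, hpj]; simp
        · by_cases h2 : i = k
          · rw [h2, hqk]; simp [h1, h2, Ne.symm hjk]
          · simp [hq, h1, h2]
      rw [Finset.sum_congr rfl (fun i _ => hterm i), sum_two_ite hjk]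
    have hDj : T j ε - T j 0 ≤ τ * ε * Real.log (n * ε) := by
      have e0 : T j 0 = Real.log (1 + Real.exp (m j)) := by
        simp [hT]
      have e1 : T j ε = Real.log (1 + Real.exp (m j - n * ε * γ₀)) + τ * ε * Real.log (n * ε) :=
        rfl
      have hlog : Real.log (1 + Real.exp (m j - n * ε * γ₀)) ≤ Real.log (1 + Real.exp (m j)) := by
        apply Real.log_le_log (by positivity)
        have : m j - n * ε * γ₀ ≤ m j := by nlinarith
        linarith [Real.exp_le_exp.2 this]
      rw [e0, e1]; linarith
    have hpk2 : 0 < p k - ε := by linarith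
    have hDk : T k (p k - ε) - T k (p k) ≤ b * ε + τ * (ε * Real.log 2) := by
      have part1 : Real.log (1 + Real.exp (m k - n * (p k - ε) * γ₀))
          - Real.log (1 + Real.exp (m k - n * p k * γ₀)) ≤ b * ε := by
        have harg : m k - n * (p k - ε) * γ₀ = (m k - n * p k * γ₀) + b * ε := by
          rw [hb]; ring
        have := logexp_shift (m k - n * p k * γ₀) (b * ε) (by positivity)
        rw [harg]
        linarith
      have hhalf : (1/2 : ℝ) ≤ n * (p k - ε) := by
        have h1n : 1 ≤ (n:ℝ) * p k := by
          have := (div_le_iff₀ hn0).mp hk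
          nlinarith
        nlinarith
      have hlog1 : -Real.log 2 ≤ Real.log (n * (p k - ε)) := by
        have h := Real.log_le_log (by norm_num : (0:ℝ) < 1/2) hhalf
        rw [show (1/2:ℝ) = 2⁻¹ by norm_num, Real.log_inv] at h
        exact h
      have hlog2 : Real.log (n * (p k - ε)) ≤ Real.log (n * p k) :=
        Real.log_le_log (by positivity) (by nlinarith)
      set L1 := Real.log (n * (p k - ε)) with hL1
      set L2 := Real.log (n * p k) with hL2
      have part2 : τ * (p k - ε) * L1 - τ * p k * L2 ≤ τ * (ε * Real.log 2) := by
        have t2 : p k * (L1 - L2) ≤ 0 :=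
          mul_nonpos_of_nonneg_of_nonpos (hpK.1 k) (by linarith)
        calc τ * (p k - ε) * L1 - τ * p k * L2 = τ * ((-ε) * L1 + p k * (L1 - L2)) := by ring
          _ ≤ τ * (ε * Real.log 2 + 0) := by
              apply mul_le_mul_of_nonneg_left _ hτ.le
              have : (-ε) * L1 ≤ ε * Real.log 2 := by nlinarith
              linarith
          _ = τ * (ε * Real.log 2) := by ring
      have e1 : T k (p k - ε) = Real.log (1 + Real.exp (m k - n * (p k - ε) * γ₀))
          + τ * (p k - ε) * L1 := rfl
      have e2 : T k (p k) = Real.log (1 + Real.exp (m k - n * p k * γ₀)) + τ * p k * L2 := rfl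
      rw [e1, e2]; linarith
    have hlogε : Real.log (n * ε) ≤ -c := by
      have h1 : (n:ℝ) * ε ≤ Real.exp (-c) := by
        calc (n:ℝ) * ε ≤ n * (Real.exp (-c) / n) := by
              exact mul_le_mul_of_nonneg_left hεe hn0.le
          _ = Real.exp (-c) := by field_simp
      calc Real.log (n * ε) ≤ Real.log (Real.exp (-c)) := Real.log_le_log (by positivity) h1
        _ = -c := Real.log_exp _
    have hfinal : F q - F p < 0 := by
      rw [hsplit]
      have h1 : τ * ε * Real.log (n * ε) ≤ τ * ε * (-c) :=
        mul_le_mul_of_nonneg_left hlogε (by positivity)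
      have h2 : τ * ε * (-c) + b * ε + τ * (ε * Real.log 2) = -(ε * τ) := by
        linear_combination (-ε) * hc_id
      nlinarith [mul_pos hεpos hτ]
    have := hpmin hqK
    simp only [Set.mem_setOf_eq] at this
    linarith
  -- assemble
  have hpS : p ∈ S := ⟨hpos, hpK.2⟩
  have hmin : ∀ r ∈ S, F p ≤ F r := by
    intro r hr
    have : r ∈ stdSimplex ℝ (Fin n) := ⟨fun i => (hr.1 i).le, hr.2⟩
    exact hpmin this
  refine ⟨p, ⟨⟨hpos, hpK.2⟩, fun r hr => hmin r hr⟩, ?_⟩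
  rintro r ⟨hrS, hrmin⟩
  by_contra hne
  have hrS' : r ∈ S := hrS
  have hz : (1/2:ℝ) • r + (1/2:ℝ) • p ∈ S :=
    hSC.1 hrS' hpS (by norm_num) (by norm_num) (by norm_num)
  have h1 := hSC.2 hrS' hpS hne (by norm_num : (0:ℝ) < 1/2) (by norm_num : (0:ℝ) < 1/2)
    (by norm_num)
  have h2 : F p = F r := le_antisymm (hmin r hrS') (hrmin p hpS)
  have h3 := hrmin _ hz
  simp only [smul_eq_mul] at h1
  have h3' : F r ≤ F ((1/2:ℝ) • r + (1/2:ℝ) • p) := h3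
  linarith
end

section
/- Let σ be the sigmoid, γ₀ ∈ ℝ fixed, and define for m > 0 the function ε(m, δ) = δ(1 - σ(m - γ₀))/(log(1 + e^{m+γ₀}) - log(1 + e^{γ₀-m})) with δ > 0 fixed. Then ∂ε/∂m < 0 for all sufficiently large m; i.e., the effective label-smoothing parameter decreases in the reward margin. -/
noncomputable def sigmoid (x : ℝ) : ℝ := 1 / (1 + Real.exp (-x))

theorem epsilon_eventually_decreasing (γ₀ δ : ℝ) (hδ : 0 < δ) :
    ∃ M : ℝ, ∀ m : ℝ, M ≤ m →
      deriv (fun m' : ℝ => δ * (1 - sigmoid (m' - γ₀)) /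
        (Real.log (1 + Real.exp (m' + γ₀)) - Real.log (1 + Real.exp (γ₀ - m')))) m < 0 := by
  refine ⟨1, fun m hm => ?_⟩
  have hm0 : 0 < m := by linarith
  set a := Real.exp (m + γ₀) with ha
  set b := Real.exp (γ₀ - m) with hb
  have hapos : 0 < a := Real.exp_pos _
  have hbpos : 0 < b := Real.exp_pos _
  have ha1 : (0:ℝ) < 1 + a := by positivity
  have hb1 : (0:ℝ) < 1 + b := by positivity
  have hD : 0 < Real.log (1 + a) - Real.log (1 + b) := by
    apply sub_pos.mpr
    apply Real.log_lt_log hb1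
    apply (add_lt_add_iff_left 1).mpr
    exact Real.exp_lt_exp.mpr (by linarith)
  have hinner1 : HasDerivAt (fun m' : ℝ => 1 + Real.exp (m' + γ₀)) a m := by
    simpa using (((hasDerivAt_id m).add_const γ₀).exp.const_add 1)
  have hinner2 : HasDerivAt (fun m' : ℝ => 1 + Real.exp (γ₀ - m')) (-b) m := by
    simpa using (((hasDerivAt_id m).const_sub γ₀).exp.const_add 1)
  have hDen : HasDerivAt (fun m' : ℝ =>
      Real.log (1 + Real.exp (m' + γ₀)) - Real.log (1 + Real.exp (γ₀ - m')))
      (a / (1 + a) + b / (1 + b)) m := by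
    have h1 := hinner1.log (ne_of_gt ha1)
    have h2 := hinner2.log (ne_of_gt hb1)
    have := h1.fun_sub h2
    refine this.congr_deriv ?_
    rw [← ha, ← hb]
    ring
  have hinv : HasDerivAt (fun m' : ℝ => (1 + Real.exp (γ₀ - m'))⁻¹) (b / (1 + b) ^ 2) m := by
    have := hinner2.fun_inv (ne_of_gt hb1)
    refine this.congr_deriv ?_
    rw [← hb, neg_neg]
  have hNum : HasDerivAt (fun m' : ℝ => δ * (1 - sigmoid (m' - γ₀)))
      (δ * (-(b / (1 + b) ^ 2))) m := by
    have h := (hinv.const_sub 1).const_mul δ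
    have hfun : (fun m' : ℝ => δ * (1 - sigmoid (m' - γ₀)))
        = (fun m' : ℝ => δ * (1 - (1 + Real.exp (γ₀ - m'))⁻¹)) := by
      funext m'
      simp [sigmoid, neg_sub, one_div]
    rw [hfun]
    exact h
  have hdiv := hNum.fun_div hDen (ne_of_gt hD)
  rw [hdiv.deriv]
  apply div_neg_of_neg_of_pos
  · have hsig : sigmoid (m - γ₀) < 1 := by
      unfold sigmoid
      rw [div_lt_one (by positivity)]
      have : 0 < Real.exp (-(m - γ₀)) := Real.exp_pos _
      linarith
    have hN : 0 < δ * (1 - sigmoid (m - γ₀)) := by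
      apply mul_pos hδ; linarith
    have hD' : 0 < a / (1 + a) + b / (1 + b) := by positivity
    have h1 : δ * (-(b / (1 + b) ^ 2)) * (Real.log (1 + a) - Real.log (1 + b)) < 0 := by
      apply mul_neg_of_neg_of_pos _ hD
      have : 0 < b / (1 + b) ^ 2 := by positivity
      nlinarith
    nlinarith [mul_pos hN hD']
  · positivity
end
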